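/- Let G = (V, E, w, ⟨V_A, V_B⟩) be a game graph. Define energy functions recursively by e_0(u) = 0 for all u ∈ V, and for j ≥ 1: e_j(u) = max{0, min_{(u,v)∈E} (e_{j−1}(v) − w(u, v))} if u ∈ V_A, and e_j(u) = max{0, max_{(u,v)∈E} (e_{j−1}(v) − w(u, v))} if u ∈ V_B. Then for every i ≥ 0 and every u ∈ V, e_i(u) = e*_i(u), the value of the i-round game at u. -/

import Mathlib

open scoped Classical

/-- `IsWalk E u k`: the sequence `u 0, u 1, …, u k` is a walk in the directed
graph with edge relation `E`. -/
def IsWalk {V : Type*} (E : V → V → Prop) (u : ℕ → V) (k : ℕ) : Prop :=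
  ∀ i < k, E (u i) (u (i + 1))

/-- The total weight of the walk `u 0, …, u k`. -/
def walkWeight {V : Type*} (w : V → V → ℤ) (u : ℕ → V) (k : ℕ) : ℤ :=
  ∑ i ∈ Finset.range k, w (u i) (u (i + 1))

/-- A (history-dependent) strategy is a map from nonempty histories to vertices.
A history `x_0 ⋯ x_j` is encoded as the list `[x_j, …, x_0]` (most recent first).
`AliceStrat E VA σ` says: for every history ending (currently) at a vertex
`x ∈ V_A`, the strategy moves along an edge of the graph. -/
def AliceStrat {V : Type*} (E : V → V → Prop) (VA : Set V) (σ : List V → V) : Prop :=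
  ∀ (x : V) (h : List V), x ∈ VA → E x (σ (x :: h))

/-- A strategy for Bob: Bob controls the vertices of `V_B = V_Aᶜ`. -/
def BobStrat {V : Type*} (E : V → V → Prop) (VA : Set V) (τ : List V → V) : Prop :=
  ∀ (x : V) (h : List V), x ∉ VA → E x (τ (x :: h))

/-- Auxiliary: the pair (current vertex, reversed history of previous vertices)
after `k` rounds of play from `u` with strategies `σ` (Alice, on `V_A`) and
`τ` (Bob, on `V_B = V_Aᶜ`). -/
noncomputable def playAux {V : Type*} (VA : Set V) (σ τ : List V → V) (u : V) :
    ℕ → V × List V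
  | 0 => (u, [])
  | k + 1 =>
    let p := playAux VA σ τ u k
    (if p.1 ∈ VA then σ (p.1 :: p.2) else τ (p.1 :: p.2), p.1 :: p.2)

/-- `play VA σ τ u k` is the vertex `u_k` of the consistent path
`u_0 = u, u_1, u_2, …` with respect to the strategies `σ` and `τ`. -/
noncomputable def play {V : Type*} (VA : Set V) (σ τ : List V → V) (u : V) (k : ℕ) : V :=
  (playAux VA σ τ u k).1

/-- `eVal w VA i σ τ u = max {0, - min_{0 ≤ j ≤ i} Σ_{k<j} w(u_k, u_{k+1})}`,
the minimum over all prefixes of the consistent path of length `i` from `u`. -/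
noncomputable def eVal {V : Type*} (w : V → V → ℤ) (VA : Set V) (i : ℕ)
    (σ τ : List V → V) (u : V) : ℤ :=
  max 0 (-(Finset.range (i + 1)).inf' ⟨0, Finset.mem_range.mpr (Nat.succ_pos i)⟩
    (fun j => walkWeight w (play VA σ τ u) j))

/-- The value `e*_i(u)` of the `i`-round game at `u`:
`min_σ max_τ e_{σ,τ}(u)` over all (history-dependent) strategies. -/
noncomputable def eStar {V : Type*} (E : V → V → Prop) (w : V → V → ℤ)
    (VA : Set V) (i : ℕ) (u : V) : ℤ :=
  sInf {x : ℤ | ∃ σ, AliceStrat E VA σ ∧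
    x = sSup {y : ℤ | ∃ τ, BobStrat E VA τ ∧ y = eVal w VA i σ τ u}}


section AuxLemmas

variable {V : Type*}

lemma playAux_congr (VA : Set V) (σ₁ σ₂ τ₁ τ₂ : List V → V) (u : V)
    (hσ : ∀ x h, σ₁ (x :: h) = σ₂ (x :: h)) (hτ : ∀ x h, τ₁ (x :: h) = τ₂ (x :: h)) :
    ∀ k, playAux VA σ₁ τ₁ u k = playAux VA σ₂ τ₂ u k := by
  intro k
  induction k with
  | zero => rfl
  | succ k ih =>
    simp only [playAux, ih]
    split
    · rw [hσ]
    · rw [hτ]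

lemma play_congr (VA : Set V) (σ₁ σ₂ τ₁ τ₂ : List V → V) (u : V)
    (hσ : ∀ x h, σ₁ (x :: h) = σ₂ (x :: h)) (hτ : ∀ x h, τ₁ (x :: h) = τ₂ (x :: h)) :
    play VA σ₁ τ₁ u = play VA σ₂ τ₂ u :=
  funext fun k => congrArg Prod.fst (playAux_congr VA σ₁ σ₂ τ₁ τ₂ u hσ hτ k)

lemma eVal_congr (w : V → V → ℤ) (VA : Set V) (i : ℕ) (σ₁ σ₂ τ₁ τ₂ : List V → V) (u : V)
    (hσ : ∀ x h, σ₁ (x :: h) = σ₂ (x :: h)) (hτ : ∀ x h, τ₁ (x :: h) = τ₂ (x :: h)) :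
    eVal w VA i σ₁ τ₁ u = eVal w VA i σ₂ τ₂ u := by
  unfold eVal
  rw [play_congr VA σ₁ σ₂ τ₁ τ₂ u hσ hτ]

lemma inf'_le' {ι : Type*} (s : Finset ι) (H : s.Nonempty) (f : ι → ℤ) (b : ι)
    (hb : b ∈ s) : s.inf' H f ≤ f b :=
  Finset.inf'_le f hb

lemma playAux_shift (VA : Set V) (σ τ : List V → V) (u : V) :
    ∀ k, playAux VA σ τ u (k + 1) =
      ((playAux VA (fun h => σ (h ++ [u])) (fun h => τ (h ++ [u]))
          (if u ∈ VA then σ [u] else τ [u]) k).1,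
       (playAux VA (fun h => σ (h ++ [u])) (fun h => τ (h ++ [u]))
          (if u ∈ VA then σ [u] else τ [u]) k).2 ++ [u]) := by
  intro k
  induction k with
  | zero => simp [playAux]; by_cases hu : u ∈ VA <;> simp [hu]
  | succ k ih =>
    have hstep : playAux VA σ τ u (k + 1 + 1) =
        (let p := playAux VA σ τ u (k + 1);
         (if p.1 ∈ VA then σ (p.1 :: p.2) else τ (p.1 :: p.2), p.1 :: p.2)) := rfl
    rw [hstep, ih]
    simp [playAux]

lemma play_shift (VA : Set V) (σ τ : List V → V) (u : V) (k : ℕ) :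
    play VA σ τ u (k + 1) =
      play VA (fun h => σ (h ++ [u])) (fun h => τ (h ++ [u]))
        (if u ∈ VA then σ [u] else τ [u]) k := by
  unfold play
  rw [playAux_shift]

lemma walkWeight_zero (w : V → V → ℤ) (f : ℕ → V) : walkWeight w f 0 = 0 := by
  simp [walkWeight]

lemma eVal_zero (w : V → V → ℤ) (VA : Set V) (σ τ : List V → V) (u : V) :
    eVal w VA 0 σ τ u = 0 := by
  simp [eVal, walkWeight]

lemma eVal_nonneg (w : V → V → ℤ) (VA : Set V) (i : ℕ) (σ τ : List V → V) (u : V) :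
    0 ≤ eVal w VA i σ τ u := le_max_left _ _

lemma eVal_succ (w : V → V → ℤ) (VA : Set V) (i : ℕ) (σ τ : List V → V) (u : V) :
    eVal w VA (i + 1) σ τ u =
      max 0 (eVal w VA i (fun h => σ (h ++ [u])) (fun h => τ (h ++ [u]))
        (if u ∈ VA then σ [u] else τ [u])
        - w u (if u ∈ VA then σ [u] else τ [u])) := by
  set u1 := if u ∈ VA then σ [u] else τ [u] with hu1
  set σ' : List V → V := fun h => σ (h ++ [u]) with hσ'
  set τ' : List V → V := fun h => τ (h ++ [u]) with hτ'
  have hplay0 : play VA σ τ u 0 = u := rfl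
  have hshift : ∀ k, play VA σ τ u (k + 1) = play VA σ' τ' u1 k := fun k =>
    play_shift VA σ τ u k
  have hW : ∀ j, walkWeight w (play VA σ τ u) (j + 1)
      = walkWeight w (play VA σ' τ' u1) j + w u u1 := by
    intro j
    have hp0 : play VA σ' τ' u1 0 = u1 := rfl
    unfold walkWeight
    rw [Finset.sum_range_succ']
    simp only [hshift, hplay0, hp0]
  have hW0 : ∀ (f : ℕ → V), walkWeight w f 0 = 0 := walkWeight_zero w
  have key : (Finset.range (i + 1 + 1)).inf' Finset.nonempty_range_add_one
        (fun j => walkWeight w (play VA σ τ u) j)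
      = min 0 ((Finset.range (i + 1)).inf' Finset.nonempty_range_add_one
        (fun j => walkWeight w (play VA σ' τ' u1) j) + w u u1) := by
    apply le_antisymm
    · apply le_min
      · have h0mem : (0 : ℕ) ∈ Finset.range (i + 1 + 1) := by simp
        have := inf'_le' _ Finset.nonempty_range_add_one
          (fun j => walkWeight w (play VA σ τ u) j) 0 h0mem
        simpa [hW0] using this
      · obtain ⟨j, hj, hje⟩ := Finset.exists_mem_eq_inf'
          (s := Finset.range (i + 1)) Finset.nonempty_range_add_one
          (fun j => walkWeight w (play VA σ' τ' u1) j)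
        rw [hje, ← hW j]
        apply Finset.inf'_le
        simp only [Finset.mem_range] at hj ⊢
        omega
    · apply Finset.le_inf'
      intro j hj
      match j with
      | 0 =>
        have := min_le_left (0 : ℤ) ((Finset.range (i + 1)).inf' Finset.nonempty_range_add_one
          (fun j => walkWeight w (play VA σ' τ' u1) j) + w u u1)
        simpa [hW0] using this
      | j + 1 =>
        have hjm : j ∈ Finset.range (i + 1) := by
          simp only [Finset.mem_range] at hj ⊢
          omega
        calc min 0 ((Finset.range (i + 1)).inf' Finset.nonempty_range_add_one
              (fun j => walkWeight w (play VA σ' τ' u1) j) + w u u1)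
            ≤ (Finset.range (i + 1)).inf' Finset.nonempty_range_add_one
              (fun j => walkWeight w (play VA σ' τ' u1) j) + w u u1 := min_le_right _ _
          _ ≤ walkWeight w (play VA σ' τ' u1) j + w u u1 :=
              add_le_add_left (inf'_le' _ Finset.nonempty_range_add_one
                (fun j => walkWeight w (play VA σ' τ' u1) j) j hjm) _
          _ = walkWeight w (play VA σ τ u) (j + 1) := (hW j).symm
  have hm0 : (Finset.range (i + 1)).inf' Finset.nonempty_range_add_one
      (fun j => walkWeight w (play VA σ' τ' u1) j) ≤ 0 := by
    have h0mem : (0 : ℕ) ∈ Finset.range (i + 1) := by simp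
    have := inf'_le' _ Finset.nonempty_range_add_one
      (fun j => walkWeight w (play VA σ' τ' u1) j) 0 h0mem
    simpa [hW0] using this
  unfold eVal
  rw [key]
  generalize (Finset.range (i + 1)).inf' Finset.nonempty_range_add_one
    (fun j => walkWeight w (play VA σ' τ' u1) j) = m at hm0 ⊢
  generalize w u u1 = c
  omega

lemma eVal_le_bound [Fintype V] (w : V → V → ℤ) (VA : Set V) (i : ℕ)
    (σ τ : List V → V) (u : V) :
    eVal w VA i σ τ u ≤ (i : ℤ) * ∑ a : V, ∑ b : V, |w a b| := by
  set M := ∑ a : V, ∑ b : V, |w a b| with hM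
  have hM0 : 0 ≤ M := Finset.sum_nonneg fun a _ => Finset.sum_nonneg fun b _ => abs_nonneg _
  have hwle : ∀ a b, |w a b| ≤ M := by
    intro a b
    calc |w a b| ≤ ∑ b' : V, |w a b'| :=
          Finset.single_le_sum (f := fun b' => |w a b'|)
            (fun b' _ => abs_nonneg _) (Finset.mem_univ b)
      _ ≤ M := Finset.single_le_sum (f := fun a => ∑ b' : V, |w a b'|)
          (fun a' _ => Finset.sum_nonneg fun b' _ => abs_nonneg _) (Finset.mem_univ a)
  have key : ∀ j, j ≤ i → -(walkWeight w (play VA σ τ u) j) ≤ (i : ℤ) * M := by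
    intro j hj
    have h1 : -(walkWeight w (play VA σ τ u) j)
        ≤ ∑ k ∈ Finset.range j, |w (play VA σ τ u k) (play VA σ τ u (k + 1))| := by
      unfold walkWeight
      rw [← Finset.sum_neg_distrib]
      exact Finset.sum_le_sum fun k _ => neg_le_abs _
    have h2 : ∑ k ∈ Finset.range j, |w (play VA σ τ u k) (play VA σ τ u (k + 1))|
        ≤ ∑ _k ∈ Finset.range j, M := Finset.sum_le_sum fun k _ => hwle _ _
    have h3 : ∑ _k ∈ Finset.range j, M = (j : ℤ) * M := by
      simp [Finset.sum_const, nsmul_eq_mul]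
    have h4 : (j : ℤ) * M ≤ (i : ℤ) * M :=
      mul_le_mul_of_nonneg_right (by exact_mod_cast hj) hM0
    omega
  unfold eVal
  apply max_le (mul_nonneg (Int.natCast_nonneg i) hM0)
  obtain ⟨j, hj, hje⟩ := Finset.exists_mem_eq_inf'
    (s := Finset.range (i + 1)) Finset.nonempty_range_add_one
    (fun j => walkWeight w (play VA σ τ u) j)
  rw [hje]
  exact key j (by simp only [Finset.mem_range] at hj; omega)

lemma edgeSet_eq (E : V → V → Prop) (x : V) (g : V → ℤ) :
    {z : ℤ | ∃ v, E x v ∧ z = g v} = g '' {v | E x v} := by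
  ext z
  constructor
  · rintro ⟨v, hv, rfl⟩; exact ⟨v, hv, rfl⟩
  · rintro ⟨v, hv, rfl⟩; exact ⟨v, hv, rfl⟩

lemma edgeSet_finite [Fintype V] (E : V → V → Prop) (x : V) (g : V → ℤ) :
    ({z : ℤ | ∃ v, E x v ∧ z = g v}).Finite := by
  rw [edgeSet_eq]
  exact (Set.toFinite _).image g

lemma exists_min_edge [Fintype V] (E : V → V → Prop) (hout : ∀ v : V, ∃ x, E v x)
    (x : V) (g : V → ℤ) : ∃ v, E x v ∧ ∀ v', E x v' → g v ≤ g v' := by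
  obtain ⟨v0, hv0⟩ := hout x
  obtain ⟨b, hb, hmin⟩ := Finset.exists_min_image ((Finset.univ : Finset V).filter (E x)) g
    ⟨v0, by simp [hv0]⟩
  exact ⟨b, by simpa using hb, fun v' hv' => hmin v' (by simp [hv'])⟩

lemma exists_max_edge [Fintype V] (E : V → V → Prop) (hout : ∀ v : V, ∃ x, E v x)
    (x : V) (g : V → ℤ) : ∃ v, E x v ∧ ∀ v', E x v' → g v' ≤ g v := by
  obtain ⟨v0, hv0⟩ := hout x
  obtain ⟨b, hb, hmax⟩ := Finset.exists_max_image ((Finset.univ : Finset V).filter (E x)) g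
    ⟨v0, by simp [hv0]⟩
  exact ⟨b, by simpa using hb, fun v' hv' => hmax v' (by simp [hv'])⟩

noncomputable def pickMin [Fintype V] (E : V → V → Prop) (hout : ∀ v : V, ∃ x, E v x)
    (x : V) (g : V → ℤ) : V := (exists_min_edge E hout x g).choose

lemma pickMin_edge [Fintype V] (E : V → V → Prop) (hout : ∀ v : V, ∃ x, E v x)
    (x : V) (g : V → ℤ) : E x (pickMin E hout x g) :=
  (exists_min_edge E hout x g).choose_spec.1

lemma pickMin_min [Fintype V] (E : V → V → Prop) (hout : ∀ v : V, ∃ x, E v x)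
    (x : V) (g : V → ℤ) : ∀ v, E x v → g (pickMin E hout x g) ≤ g v :=
  (exists_min_edge E hout x g).choose_spec.2

noncomputable def pickMax [Fintype V] (E : V → V → Prop) (hout : ∀ v : V, ∃ x, E v x)
    (x : V) (g : V → ℤ) : V := (exists_max_edge E hout x g).choose

lemma pickMax_edge [Fintype V] (E : V → V → Prop) (hout : ∀ v : V, ∃ x, E v x)
    (x : V) (g : V → ℤ) : E x (pickMax E hout x g) :=
  (exists_max_edge E hout x g).choose_spec.1

lemma pickMax_max [Fintype V] (E : V → V → Prop) (hout : ∀ v : V, ∃ x, E v x)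
    (x : V) (g : V → ℤ) : ∀ v, E x v → g v ≤ g (pickMax E hout x g) :=
  (exists_max_edge E hout x g).choose_spec.2

lemma sInf_le_edge [Fintype V] (E : V → V → Prop) (x : V) (g : V → ℤ) (v : V)
    (hv : E x v) : sInf {z : ℤ | ∃ v, E x v ∧ z = g v} ≤ g v :=
  csInf_le (edgeSet_finite E x g).bddBelow ⟨v, hv, rfl⟩

lemma le_sSup_edge [Fintype V] (E : V → V → Prop) (x : V) (g : V → ℤ) (v : V)
    (hv : E x v) : g v ≤ sSup {z : ℤ | ∃ v, E x v ∧ z = g v} :=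
  le_csSup (edgeSet_finite E x g).bddAbove ⟨v, hv, rfl⟩

lemma sInf_edge [Fintype V] (E : V → V → Prop) (hout : ∀ v : V, ∃ x, E v x)
    (x : V) (g : V → ℤ) :
    sInf {z : ℤ | ∃ v, E x v ∧ z = g v} = g (pickMin E hout x g) := by
  apply le_antisymm
  · exact sInf_le_edge E x g _ (pickMin_edge E hout x g)
  · apply le_csInf
    · exact ⟨g (pickMin E hout x g), pickMin E hout x g, pickMin_edge E hout x g, rfl⟩
    · rintro b ⟨v, hv, rfl⟩
      exact pickMin_min E hout x g v hv

lemma sSup_edge [Fintype V] (E : V → V → Prop) (hout : ∀ v : V, ∃ x, E v x)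
    (x : V) (g : V → ℤ) :
    sSup {z : ℤ | ∃ v, E x v ∧ z = g v} = g (pickMax E hout x g) := by
  apply le_antisymm
  · apply csSup_le
    · exact ⟨g (pickMax E hout x g), pickMax E hout x g, pickMax_edge E hout x g, rfl⟩
    · rintro b ⟨v, hv, rfl⟩
      exact pickMax_max E hout x g v hv
  · exact le_sSup_edge E x g _ (pickMax_edge E hout x g)

noncomputable def sigA [Fintype V] [Nonempty V] (E : V → V → Prop)
    (hout : ∀ v : V, ∃ x, E v x) (w : V → V → ℤ) (e : ℕ → V → ℤ) (i : ℕ) :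
    List V → V
  | [] => Classical.arbitrary V
  | x :: h => pickMin E hout x (fun v => e (i - h.length - 1) v - w x v)

noncomputable def tauB [Fintype V] [Nonempty V] (E : V → V → Prop)
    (hout : ∀ v : V, ∃ x, E v x) (w : V → V → ℤ) (e : ℕ → V → ℤ) (i : ℕ) :
    List V → V
  | [] => Classical.arbitrary V
  | x :: h => pickMax E hout x (fun v => e (i - h.length - 1) v - w x v)

lemma sigA_strat [Fintype V] [Nonempty V] (E : V → V → Prop) (VA : Set V)
    (hout : ∀ v : V, ∃ x, E v x) (w : V → V → ℤ) (e : ℕ → V → ℤ) (i : ℕ) :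
    AliceStrat E VA (sigA E hout w e i) := by
  intro x h _
  exact pickMin_edge E hout x _

lemma tauB_strat [Fintype V] [Nonempty V] (E : V → V → Prop) (VA : Set V)
    (hout : ∀ v : V, ∃ x, E v x) (w : V → V → ℤ) (e : ℕ → V → ℤ) (i : ℕ) :
    BobStrat E VA (tauB E hout w e i) := by
  intro x h _
  exact pickMax_edge E hout x _

lemma sigA_shift [Fintype V] [Nonempty V] (E : V → V → Prop)
    (hout : ∀ v : V, ∃ x, E v x) (w : V → V → ℤ) (e : ℕ → V → ℤ) (i : ℕ) (u : V) :
    ∀ (x : V) (h : List V),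
      sigA E hout w e (i + 1) ((x :: h) ++ [u]) = sigA E hout w e i (x :: h) := by
  intro x h
  rw [List.cons_append]
  show pickMin E hout x (fun v => e (i + 1 - (h ++ [u]).length - 1) v - w x v)
    = pickMin E hout x (fun v => e (i - h.length - 1) v - w x v)
  have hlen : i + 1 - (h ++ [u]).length - 1 = i - h.length - 1 := by
    simp only [List.length_append, List.length_cons, List.length_nil]
    omega
  rw [hlen]

lemma tauB_shift [Fintype V] [Nonempty V] (E : V → V → Prop)
    (hout : ∀ v : V, ∃ x, E v x) (w : V → V → ℤ) (e : ℕ → V → ℤ) (i : ℕ) (u : V) :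
    ∀ (x : V) (h : List V),
      tauB E hout w e (i + 1) ((x :: h) ++ [u]) = tauB E hout w e i (x :: h) := by
  intro x h
  rw [List.cons_append]
  show pickMax E hout x (fun v => e (i + 1 - (h ++ [u]).length - 1) v - w x v)
    = pickMax E hout x (fun v => e (i - h.length - 1) v - w x v)
  have hlen : i + 1 - (h ++ [u]).length - 1 = i - h.length - 1 := by
    simp only [List.length_append, List.length_cons, List.length_nil]
    omega
  rw [hlen]

lemma alice_guarantee [Fintype V] [Nonempty V] (E : V → V → Prop) (w : V → V → ℤ)
    (VA : Set V) (hout : ∀ v : V, ∃ x, E v x) (e : ℕ → V → ℤ)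
    (h0 : ∀ u, e 0 u = 0)
    (hA : ∀ j u, u ∈ VA →
      e (j + 1) u = max 0 (sInf {x : ℤ | ∃ v, E u v ∧ x = e j v - w u v}))
    (hB : ∀ j u, u ∉ VA →
      e (j + 1) u = max 0 (sSup {x : ℤ | ∃ v, E u v ∧ x = e j v - w u v})) :
    ∀ (i : ℕ) (u : V) (τ : List V → V), BobStrat E VA τ →
      eVal w VA i (sigA E hout w e i) τ u ≤ e i u := by
  intro i
  induction i with
  | zero =>
    intro u τ _
    rw [eVal_zero, h0]
  | succ i ih =>
    intro u τ hτ
    rw [eVal_succ]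
    set σ := sigA E hout w e (i + 1) with hσdef
    set u1 := if u ∈ VA then σ [u] else τ [u] with hu1
    have hτ' : BobStrat E VA (fun h => τ (h ++ [u])) := by
      intro x h hx
      exact hτ x (h ++ [u]) hx
    have hcong : eVal w VA i (fun h => σ (h ++ [u])) (fun h => τ (h ++ [u])) u1
        = eVal w VA i (sigA E hout w e i) (fun h => τ (h ++ [u])) u1 :=
      eVal_congr w VA i _ _ _ _ u1 (sigA_shift E hout w e i u) (fun _ _ => rfl)
    have hIH := ih u1 (fun h => τ (h ++ [u])) hτ'
    have hmain : eVal w VA i (fun h => σ (h ++ [u])) (fun h => τ (h ++ [u])) u1 ≤ e i u1 :=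
      hcong.trans_le hIH
    by_cases hu : u ∈ VA
    · have hu1e : u1 = pickMin E hout u (fun v => e i v - w u v) := by
        rw [hu1, if_pos hu, hσdef]
        show pickMin E hout u (fun v => e (i + 1 - ([] : List V).length - 1) v - w u v) = _
        norm_num
      rw [hA i u hu]
      have hsinf : sInf {x : ℤ | ∃ v, E u v ∧ x = e i v - w u v} = e i u1 - w u u1 := by
        rw [hu1e]
        exact sInf_edge E hout u (fun v => e i v - w u v)
      rw [hsinf]
      exact max_le_max le_rfl (sub_le_sub_right hmain _)
    · have hedge : E u u1 := by
        rw [hu1, if_neg hu]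
        exact hτ u [] hu
      rw [hB i u hu]
      refine max_le_max le_rfl ?_
      calc eVal w VA i (fun h => σ (h ++ [u])) (fun h => τ (h ++ [u])) u1 - w u u1
          ≤ e i u1 - w u u1 := sub_le_sub_right hmain _
        _ ≤ sSup {x : ℤ | ∃ v, E u v ∧ x = e i v - w u v} :=
            le_sSup_edge E u (fun v => e i v - w u v) u1 hedge

lemma bob_guarantee [Fintype V] [Nonempty V] (E : V → V → Prop) (w : V → V → ℤ)
    (VA : Set V) (hout : ∀ v : V, ∃ x, E v x) (e : ℕ → V → ℤ)
    (h0 : ∀ u, e 0 u = 0)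
    (hA : ∀ j u, u ∈ VA →
      e (j + 1) u = max 0 (sInf {x : ℤ | ∃ v, E u v ∧ x = e j v - w u v}))
    (hB : ∀ j u, u ∉ VA →
      e (j + 1) u = max 0 (sSup {x : ℤ | ∃ v, E u v ∧ x = e j v - w u v})) :
    ∀ (i : ℕ) (u : V) (σ : List V → V), AliceStrat E VA σ →
      e i u ≤ eVal w VA i σ (tauB E hout w e i) u := by
  intro i
  induction i with
  | zero =>
    intro u σ _
    rw [eVal_zero, h0]
  | succ i ih =>
    intro u σ hσ
    rw [eVal_succ]
    set τ := tauB E hout w e (i + 1) with hτdef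
    set u1 := if u ∈ VA then σ [u] else τ [u] with hu1
    have hσ' : AliceStrat E VA (fun h => σ (h ++ [u])) := by
      intro x h hx
      exact hσ x (h ++ [u]) hx
    have hcong : eVal w VA i (fun h => σ (h ++ [u])) (fun h => τ (h ++ [u])) u1
        = eVal w VA i (fun h => σ (h ++ [u])) (tauB E hout w e i) u1 :=
      eVal_congr w VA i _ _ _ _ u1 (fun _ _ => rfl) (tauB_shift E hout w e i u)
    have hIH := ih u1 (fun h => σ (h ++ [u])) hσ'
    have hmain : e i u1 ≤ eVal w VA i (fun h => σ (h ++ [u])) (fun h => τ (h ++ [u])) u1 :=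
      hIH.trans_eq hcong.symm
    by_cases hu : u ∈ VA
    · have hedge : E u u1 := by
        rw [hu1, if_pos hu]
        exact hσ u [] hu
      rw [hA i u hu]
      refine max_le_max le_rfl ?_
      calc sInf {x : ℤ | ∃ v, E u v ∧ x = e i v - w u v}
          ≤ e i u1 - w u u1 := sInf_le_edge E u (fun v => e i v - w u v) u1 hedge
        _ ≤ eVal w VA i (fun h => σ (h ++ [u])) (fun h => τ (h ++ [u])) u1 - w u u1 :=
            sub_le_sub_right hmain _
    · have hu1e : u1 = pickMax E hout u (fun v => e i v - w u v) := by
        rw [hu1, if_neg hu, hτdef]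
        show pickMax E hout u (fun v => e (i + 1 - ([] : List V).length - 1) v - w u v) = _
        norm_num
      rw [hB i u hu]
      have hssup : sSup {x : ℤ | ∃ v, E u v ∧ x = e i v - w u v} = e i u1 - w u u1 := by
        rw [hu1e]
        exact sSup_edge E hout u (fun v => e i v - w u v)
      rw [hssup]
      exact max_le_max le_rfl (sub_le_sub_right hmain _)

end AuxLemmas

/-- The value iteration recurrence computes the values of the
finite-duration games: if `e 0 u = 0` for all `u`, and for all `j`:
`e (j+1) u = max {0, min_{(u,v) ∈ E} (e j v - w u v)}` for `u ∈ V_A`, and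
`e (j+1) u = max {0, max_{(u,v) ∈ E} (e j v - w u v)}` for `u ∈ V_B`, then
`e i u = e*_i(u)` for every `i` and every `u`. -/
theorem value_iteration_correct {V : Type*} [Fintype V]
    (E : V → V → Prop) (w : V → V → ℤ) (VA : Set V)
    (hout : ∀ v : V, ∃ x, E v x)
    (e : ℕ → V → ℤ)
    (h0 : ∀ u, e 0 u = 0)
    (hA : ∀ j u, u ∈ VA →
      e (j + 1) u = max 0 (sInf {x : ℤ | ∃ v, E u v ∧ x = e j v - w u v}))
    (hB : ∀ j u, u ∉ VA →
      e (j + 1) u = max 0 (sSup {x : ℤ | ∃ v, E u v ∧ x = e j v - w u v})) :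
    ∀ (i : ℕ) (u : V), e i u = eStar E w VA i u := by
  intro i u
  have hne : Nonempty V := ⟨u⟩
  have hub : ∀ σ : List V → V,
      BddAbove {y : ℤ | ∃ τ, BobStrat E VA τ ∧ y = eVal w VA i σ τ u} := by
    intro σ
    refine ⟨(i : ℤ) * ∑ a : V, ∑ b : V, |w a b|, ?_⟩
    rintro y ⟨τ, hτ, rfl⟩
    exact eVal_le_bound w VA i σ τ u
  have hTmem : ∀ σ : List V → V,
      eVal w VA i σ (tauB E hout w e i) u
        ∈ {y : ℤ | ∃ τ, BobStrat E VA τ ∧ y = eVal w VA i σ τ u} :=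
    fun σ => ⟨tauB E hout w e i, tauB_strat E VA hout w e i, rfl⟩
  apply le_antisymm
  · apply le_csInf
    · exact ⟨_, ⟨sigA E hout w e i, sigA_strat E VA hout w e i, rfl⟩⟩
    · rintro x ⟨σ, hσ, rfl⟩
      exact (bob_guarantee E w VA hout e h0 hA hB i u σ hσ).trans
        (le_csSup (hub σ) (hTmem σ))
  · have h1 : sSup {y : ℤ | ∃ τ, BobStrat E VA τ ∧
        y = eVal w VA i (sigA E hout w e i) τ u} ≤ e i u := by
      apply csSup_le ⟨_, hTmem _⟩
      rintro y ⟨τ, hτ, rfl⟩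
      exact alice_guarantee E w VA hout e h0 hA hB i u τ hτ
    refine le_trans (csInf_le ?_ ⟨sigA E hout w e i, sigA_strat E VA hout w e i, rfl⟩) h1
    refine ⟨0, ?_⟩
    rintro x ⟨σ, hσ, rfl⟩
    exact le_csSup_of_le (hub σ) (hTmem σ) (eVal_nonneg w VA i σ (tauB E hout w e i) u)
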